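/- Let T_2 be the eventually periodic sequence in Z/4Z with initial block 1000212 followed by the infinitely repeated period 312223301210312003103232. Then for every integer k ≥ 0, the Steinhaus triangle of the initial segment T_2[8k+7] of length 8k+7 is strongly balanced in Z/4Z. -/

import Mathlib

/-- Next row of a Steinhaus triangle: pairwise sums of adjacent entries. -/
def nextRow {m : ℕ} (l : List (ZMod m)) : List (ZMod m) :=
  List.zipWith (· + ·) l l.tail

/-- The rows of the Steinhaus triangle generated by the first row `l`. -/
def triangleRows {m : ℕ} (l : List (ZMod m)) : List (List (ZMod m)) :=
  (List.range l.length).map (fun i => nextRow^[i] l)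

/-- All entries of the Steinhaus triangle generated by `l`. -/
def triangleEntries {m : ℕ} (l : List (ZMod m)) : List (ZMod m) :=
  (triangleRows l).flatten

/-- The Steinhaus triangle of `l` is balanced: all elements of `ZMod m`
occur with the same multiplicity among its entries. -/
def IsBalanced {m : ℕ} (l : List (ZMod m)) : Prop :=
  ∀ a b : ZMod m, (triangleEntries l).count a = (triangleEntries l).count b

/-- The Steinhaus triangle of `l` is strongly balanced (with respect to a
given `step`): for every `t` with `step * t ≤ l.length`, the Steinhaus triangle
of the initial segment of `l` of length `l.length - step * t` is balanced. -/
def IsStronglyBalanced {m : ℕ} (step : ℕ) (l : List (ZMod m)) : Prop :=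
  ∀ t : ℕ, step * t ≤ l.length → IsBalanced (l.take (l.length - step * t))

/-- The eventually periodic sequence with initial block `I` and period `P`. -/
def evPeriodic {m : ℕ} (I P : List (ZMod m)) : ℕ → ZMod m :=
  fun i => if i < I.length then I.getD i 0 else P.getD ((i - I.length) % P.length) 0

/-- The initial segment of length `l` of the sequence `S`. -/
def seg {m : ℕ} (S : ℕ → ZMod m) (l : ℕ) : List (ZMod m) :=
  (List.range l).map S

def T2 : ℕ → ZMod 4 :=
  evPeriodic ([1,0,0,0,2,1,2] : List (ZMod 4)) ([3,1,2,2,2,3,3,0,1,2,1,0,3,1,2,0,0,3,1,0,3,2,3,2] : List (ZMod 4))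

/-! ### Auxiliary machinery -/

/-- pointwise next-row on sequences -/
def pstep {m : ℕ} (f : ℕ → ZMod m) : ℕ → ZMod m := fun j => f j + f (j+1)

/-- evolution of (initial block, period) data under the Steinhaus rule -/
def pairStep (st : List (ZMod 4) × List (ZMod 4)) : List (ZMod 4) × List (ZMod 4) :=
  (nextRow (st.1 ++ [st.2.getD 0 0]), nextRow (st.2 ++ [st.2.getD 0 0]))

def fk (i : ℕ) : List (ZMod 4) × List (ZMod 4) :=
  pairStep^[i] ([1,0,0,0,2,1,2], [3,1,2,2,2,3,3,0,1,2,1,0,3,1,2,0,0,3,1,0,3,2,3,2])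

/-- the `i`-th row of the infinite Steinhaus triangle of `T2`, as a sequence -/
def Rf (i : ℕ) : ℕ → ZMod 4 := evPeriodic (fk i).1 (fk i).2

lemma seg_length {m : ℕ} (f : ℕ → ZMod m) (L : ℕ) : (seg f L).length = L := by
  simp [seg]

lemma getElem_seg {m : ℕ} (f : ℕ → ZMod m) (L j : ℕ) (h : j < (seg f L).length) :
    (seg f L)[j] = f j := by
  simp [seg] at h ⊢

lemma length_nextRow {m : ℕ} (l : List (ZMod m)) : (nextRow l).length = l.length - 1 := by
  simp [nextRow]

lemma nextRow_seg {m : ℕ} (f : ℕ → ZMod m) (L : ℕ) :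
    nextRow (seg f L) = seg (pstep f) (L - 1) := by
  apply List.ext_getElem
  · rw [length_nextRow, seg_length, seg_length]
  · intro j h1 h2
    rw [length_nextRow, seg_length] at h1
    have hj1 : j + 1 < (seg f L).length := by rw [seg_length]; omega
    have hjt : j < (seg f L).tail.length := by simp [seg_length]; omega
    simp only [nextRow, List.getElem_zipWith]
    rw [List.getElem_tail, getElem_seg, getElem_seg, getElem_seg]
    rfl

lemma fk_lengths (i : ℕ) : (fk i).1.length = 7 ∧ (fk i).2.length = 24 := by
  induction i with
  | zero => exact ⟨rfl, rfl⟩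
  | succ n ih =>
    have : fk (n+1) = pairStep (fk n) := Function.iterate_succ_apply' _ _ _
    rw [this]
    obtain ⟨h1, h2⟩ := ih
    constructor <;> simp [pairStep, length_nextRow, h1, h2]

lemma nextRow_getElem {m : ℕ} (l : List (ZMod m)) (j : ℕ) (h : j < (nextRow l).length) :
    (nextRow l)[j] = l[j]'(by rw [length_nextRow] at h; omega)
      + l[j+1]'(by rw [length_nextRow] at h; omega) := by
  have hjt : j < l.tail.length := by rw [length_nextRow] at h; simp; omega
  simp only [nextRow, List.getElem_zipWith]
  rw [List.getElem_tail]

lemma evP_lt {m : ℕ} (I P : List (ZMod m)) {j : ℕ} (h : j < I.length) :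
    evPeriodic I P j = I.getD j 0 := if_pos h

lemma evP_ge {m : ℕ} (I P : List (ZMod m)) {j : ℕ} (h : ¬ j < I.length) :
    evPeriodic I P j = P.getD ((j - I.length) % P.length) 0 := if_neg h

/-- the key pointwise step identity for eventually periodic sequences -/
lemma pstep_evPeriodic (I P : List (ZMod 4)) (hP : P.length ≠ 0) :
    pstep (evPeriodic I P) =
      evPeriodic (nextRow (I ++ [P.getD 0 0])) (nextRow (P ++ [P.getD 0 0])) := by
  funext j
  have hlenI : (nextRow (I ++ [P.getD 0 0])).length = I.length := by
    rw [length_nextRow]; simp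
  have hlenP : (nextRow (P ++ [P.getD 0 0])).length = P.length := by
    rw [length_nextRow]; simp
  have hP0 : P.getD 0 0 = P[0]'(by omega) := List.getD_eq_getElem P 0 (by omega)
  rw [pstep]
  by_cases hja : j < I.length
  · -- in the new initial block
    have hRHS : evPeriodic (nextRow (I ++ [P.getD 0 0])) (nextRow (P ++ [P.getD 0 0])) j
        = (I ++ [P.getD 0 0])[j]'(by simp; omega)
          + (I ++ [P.getD 0 0])[j+1]'(by simp; omega) := by
      rw [evP_lt _ _ (by omega : j < (nextRow (I ++ [P.getD 0 0])).length),
        List.getD_eq_getElem _ 0 (by omega), nextRow_getElem]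
    rw [hRHS, evP_lt I P (by omega : j < I.length),
      List.getD_eq_getElem _ 0 (by omega : j < I.length)]
    by_cases hj1 : j + 1 < I.length
    · rw [List.getElem_append_left (by omega), List.getElem_append_left (by omega),
        evP_lt I P (by omega : j + 1 < I.length),
        List.getD_eq_getElem _ 0 (by omega : j + 1 < I.length)]
    · have hj1a : j + 1 = I.length := by omega
      rw [List.getElem_append_left (by omega),
        List.getElem_append_right (by omega : I.length ≤ j + 1),
        evP_ge I P (by omega : ¬ j + 1 < I.length)]
      have h0 : (j + 1 - I.length) % P.length = 0 := by
        rw [hj1a]; simp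
      have hz : j + 1 - I.length = 0 := by omega
      simp [hz, h0]
  · -- in the periodic part
    have hge : I.length ≤ j := by omega
    have hrn : (j - I.length) % P.length < P.length := Nat.mod_lt _ (by omega)
    have hsucc : (j + 1 - I.length) % P.length
        = ((j - I.length) % P.length + 1) % P.length := by
      have h1 : j + 1 - I.length = (j - I.length) + 1 := by omega
      rw [h1, Nat.add_mod]
      conv_rhs => rw [Nat.add_mod]
      simp
    rw [evP_ge I P hja, evP_ge I P (by omega : ¬ j + 1 < I.length), hsucc,
      evP_ge _ _ (by omega : ¬ j < (nextRow (I ++ [P.getD 0 0])).length)]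
    have hidx : (j - (nextRow (I ++ [P.getD 0 0])).length)
        % (nextRow (P ++ [P.getD 0 0])).length = (j - I.length) % P.length := by
      rw [hlenI, hlenP]
    rw [hidx, List.getD_eq_getElem _ 0 (by omega :
        (j - I.length) % P.length < (nextRow (P ++ [P.getD 0 0])).length),
      nextRow_getElem,
      List.getElem_append_left (by omega : (j - I.length) % P.length < P.length),
      List.getD_eq_getElem _ 0 hrn]
    congr 1
    by_cases hr1 : (j - I.length) % P.length + 1 < P.length
    · rw [List.getElem_append_left hr1,
        Nat.mod_eq_of_lt hr1, List.getD_eq_getElem _ 0 hr1]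
    · have hreq : (j - I.length) % P.length + 1 = P.length := by omega
      rw [List.getElem_append_right (by omega : P.length ≤ (j - I.length) % P.length + 1)]
      have hz : (j - I.length) % P.length + 1 - P.length = 0 := by omega
      have h0 : ((j - I.length) % P.length + 1) % P.length = 0 := by
        rw [hreq]; simp
      rw [h0]
      simp [hz]

lemma Rf_succ (i : ℕ) : Rf (i+1) = pstep (Rf i) := by
  have h2 : (fk i).2.length = 24 := (fk_lengths i).2
  have : fk (i+1) = pairStep (fk i) := Function.iterate_succ_apply' _ _ _
  rw [Rf, this, pairStep, Rf, pstep_evPeriodic _ _ (by omega)]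

lemma T2_eq_Rf0 : T2 = Rf 0 := rfl

lemma iter_nextRow_seg (i N : ℕ) :
    nextRow^[i] (seg (Rf 0) N) = seg (Rf i) (N - i) := by
  induction i with
  | zero => simp
  | succ n ih =>
    rw [Function.iterate_succ_apply', ih, nextRow_seg, ← Rf_succ, Nat.sub_sub]

lemma count_flatten' (L : List (List (ZMod 4))) (a : ZMod 4) :
    L.flatten.count a = (L.map (List.count a)).sum := by
  induction L with
  | nil => rfl
  | cons x xs ih => simp [List.count_append, ih]

lemma list_sum_range (h : ℕ → ℕ) (n : ℕ) :
    ((List.range n).map h).sum = ∑ i ∈ Finset.range n, h i := by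
  induction n with
  | zero => rfl
  | succ n ih => rw [List.range_succ, List.map_append, List.sum_append,
      Finset.sum_range_succ, ih]; simp

/-- count of element `a` in the Steinhaus triangle of the first `N` terms -/
def Fc (a : ZMod 4) (N : ℕ) : ℕ := ∑ i ∈ Finset.range N, (seg (Rf i) (N - i)).count a

lemma count_tri (a : ZMod 4) (N : ℕ) :
    (triangleEntries (seg T2 N)).count a = Fc a N := by
  rw [triangleEntries, count_flatten', triangleRows, seg_length, List.map_map, Fc]
  rw [T2_eq_Rf0]
  have : ∀ i, (List.count a ∘ fun i => nextRow^[i] (seg (Rf 0) N)) i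
      = (seg (Rf i) (N - i)).count a := by
    intro i; simp [iter_nextRow_seg]
  rw [List.map_congr_left (fun i _ => this i), list_sum_range]

/-! ### horizontal periodicity -/

lemma evP_period (I P : List (ZMod 4)) (hP : P.length ≠ 0) (L : ℕ) (h : I.length ≤ L) :
    evPeriodic I P (L + P.length) = evPeriodic I P L := by
  rw [evP_ge I P (by omega), evP_ge I P (by omega)]
  congr 1
  have : L + P.length - I.length = (L - I.length) + P.length := by omega
  rw [this, Nat.add_mod_right]

lemma window_eq_period (I P : List (ZMod 4)) (hP : P.length ≠ 0) (L : ℕ) (h : I.length ≤ L)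
    (a : ZMod 4) :
    ((List.range P.length).map (fun j => evPeriodic I P (L + j))).count a = P.count a := by
  set f := evPeriodic I P with hf
  set n := P.length with hn
  obtain ⟨d, rfl⟩ : ∃ d, L = I.length + d := ⟨L - I.length, by omega⟩
  clear h
  induction d with
  | zero =>
    have : (List.range n).map (fun j => f (I.length + 0 + j)) = P := by
      apply List.ext_getElem
      · simp [hn]
      · intro j h1 h2
        simp only [List.getElem_map, List.getElem_range]
        rw [hf, evP_ge I P (by omega)]
        have : I.length + 0 + j - I.length = j := by omega
        rw [this, Nat.mod_eq_of_lt (by omega), List.getD_eq_getElem _ 0 (by omega)]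
    rw [this]
  | succ d ih =>
    set L := I.length + d with hL
    have key : f L :: (List.range n).map (fun j => f (L + 1 + j))
        = ((List.range n).map (fun j => f (L + j))) ++ [f (L + n)] := by
      have e1 : f L :: (List.range n).map (fun j => f (L + 1 + j))
          = (List.range (n+1)).map (fun j => f (L + j)) := by
        apply List.ext_getElem
        · simp
        · intro j h1 h2
          simp only [List.getElem_map, List.getElem_range]
          match j with
          | 0 => simp
          | (j+1) =>
            simp only [List.getElem_cons_succ, List.getElem_map, List.getElem_range]
            congr 1
            omega
      have e2 : (List.range (n+1)).map (fun j => f (L + j))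
          = ((List.range n).map (fun j => f (L + j))) ++ [f (L + n)] := by
        rw [List.range_succ, List.map_append]
        rfl
      rw [e1, e2]
    have hfLn : f (L + n) = f L := evP_period I P hP L (by omega)
    have hcnt := congrArg (List.count a) key
    simp only [List.count_cons, List.count_append, List.count_nil, hfLn] at hcnt
    have hIL : I.length + (d+1) = L + 1 := by omega
    rw [hIL]
    omega

lemma count_seg_period (I P : List (ZMod 4)) (hP : P.length ≠ 0) (L : ℕ)
    (h : I.length ≤ L) (a : ZMod 4) :
    (seg (evPeriodic I P) (L + P.length)).count a
      = (seg (evPeriodic I P) L).count a + P.count a := by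
  have hsplit : seg (evPeriodic I P) (L + P.length)
      = seg (evPeriodic I P) L
        ++ (List.range P.length).map (fun j => evPeriodic I P (L + j)) := by
    rw [seg, seg, List.range_add (n := L) (m := P.length), List.map_append, List.map_map]
    rfl
  rw [hsplit, List.count_append, window_eq_period I P hP L h a]

/-- count of `a` in one period of row `i` -/
def pp (a : ZMod 4) (i : ℕ) : ℕ := ((fk i).2).count a

lemma count_seg_Rf (a : ZMod 4) (i L : ℕ) (h : 7 ≤ L) :
    (seg (Rf i) (L + 24)).count a = (seg (Rf i) L).count a + pp a i := by
  have h1 := (fk_lengths i).1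
  have h2 := (fk_lengths i).2
  have := count_seg_period (fk i).1 (fk i).2 (by omega) L (by omega) a
  rw [h2] at this
  exact this

/-! ### vertical periodicity -/

lemma fk26 : fk 26 = fk 2 := by decide

lemma fk_add24 (i : ℕ) (h : 2 ≤ i) : fk (i + 24) = fk i := by
  obtain ⟨d, rfl⟩ : ∃ d, i = 2 + d := ⟨i - 2, by omega⟩
  have e1 : fk (2 + d + 24) = pairStep^[d] (fk 26) := by
    rw [fk, fk, ← Function.iterate_add_apply]
    congr 1
    omega
  have e2 : fk (2 + d) = pairStep^[d] (fk 2) := by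
    rw [fk, fk, ← Function.iterate_add_apply]
    congr 1
    omega
  rw [e1, e2, fk26]

lemma Rf_add24 (i : ℕ) (h : 2 ≤ i) : Rf (i + 24) = Rf i := by
  rw [Rf, Rf, fk_add24 i h]

lemma pp_add24 (a : ZMod 4) (i : ℕ) (h : 2 ≤ i) : pp a (i + 24) = pp a i := by
  rw [pp, pp, fk_add24 i h]

/-! ### sum bookkeeping -/

lemma sum_range_split (g : ℕ → ℕ) (A B : ℕ) :
    ∑ i ∈ Finset.range (A + B), g i
      = (∑ i ∈ Finset.range A, g i) + ∑ j ∈ Finset.range B, g (A + j) := by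
  induction B with
  | zero => simp
  | succ B ih => rw [← Nat.add_assoc, Finset.sum_range_succ, ih, Finset.sum_range_succ,
      Nat.add_assoc]

def Sn (a : ZMod 4) : ℕ := ∑ j ∈ Finset.range 24, pp a (2 + j)

lemma window_pp (a : ZMod 4) (M : ℕ) (h : 2 ≤ M) :
    ∑ j ∈ Finset.range 24, pp a (M + j) = Sn a := by
  obtain ⟨d, rfl⟩ : ∃ d, M = 2 + d := ⟨M - 2, by omega⟩
  clear h
  induction d with
  | zero => rfl
  | succ d ih =>
    have h25 : ∑ j ∈ Finset.range 25, pp a (2 + d + j)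
        = (∑ j ∈ Finset.range 24, pp a (2 + d + j)) + pp a (2 + d + 24) :=
      Finset.sum_range_succ _ _
    have h25' : ∑ j ∈ Finset.range 25, pp a (2 + d + j)
        = (∑ j ∈ Finset.range 24, pp a (2 + d + (j + 1))) + pp a (2 + d + 0) :=
      Finset.sum_range_succ' _ _
    have e : ∀ j, 2 + d + (j + 1) = 2 + (d + 1) + j := by intro j; omega
    simp only [e] at h25'
    have hper : pp a (2 + d + 24) = pp a (2 + d) := pp_add24 a (2 + d) (by omega)
    simp only [Nat.add_zero] at h25'
    omega

def Qc (a : ZMod 4) (M : ℕ) : ℕ := ∑ i ∈ Finset.range M, pp a i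

def MidS (a : ZMod 4) (M : ℕ) : ℕ :=
  ∑ j ∈ Finset.range 30, (seg (Rf (M + j)) (30 - j)).count a

def T6 (a : ZMod 4) (M : ℕ) : ℕ :=
  ∑ j ∈ Finset.range 6, (seg (Rf (M + j)) (6 - j)).count a

lemma key_rec (a : ZMod 4) (M : ℕ) :
    Fc a (M + 30) + T6 a M = Fc a (M + 6) + Qc a M + MidS a M := by
  have e30 : Fc a (M + 30)
      = (∑ i ∈ Finset.range M, (seg (Rf i) (M + 6 - i)).count a) + Qc a M + MidS a M := by
    rw [Fc, sum_range_split _ M 30]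
    have h1 : ∀ i ∈ Finset.range M,
        (seg (Rf i) (M + 30 - i)).count a
          = (seg (Rf i) (M + 6 - i)).count a + pp a i := by
      intro i hi
      have hiM : i < M := Finset.mem_range.mp hi
      have : M + 30 - i = (M + 6 - i) + 24 := by omega
      rw [this, count_seg_Rf a i (M + 6 - i) (by omega)]
    rw [Finset.sum_congr rfl h1, Finset.sum_add_distrib]
    have h2 : ∀ j ∈ Finset.range 30,
        (seg (Rf (M + j)) (M + 30 - (M + j))).count a
          = (seg (Rf (M + j)) (30 - j)).count a := by
      intro j hj
      have : M + 30 - (M + j) = 30 - j := by omega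
      rw [this]
    rw [Finset.sum_congr rfl h2]
    rfl
  have e6 : Fc a (M + 6)
      = (∑ i ∈ Finset.range M, (seg (Rf i) (M + 6 - i)).count a) + T6 a M := by
    rw [Fc, sum_range_split _ M 6]
    have h2 : ∀ j ∈ Finset.range 6,
        (seg (Rf (M + j)) (M + 6 - (M + j))).count a
          = (seg (Rf (M + j)) (6 - j)).count a := by
      intro j hj
      have : M + 6 - (M + j) = 6 - j := by omega
      rw [this]
    rw [Finset.sum_congr rfl h2]
    rfl
  omega

lemma MidS_per (a : ZMod 4) (M : ℕ) (h : 2 ≤ M) : MidS a (M + 24) = MidS a M := by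
  rw [MidS, MidS]
  apply Finset.sum_congr rfl
  intro j _
  have e : M + 24 + j = (M + j) + 24 := by omega
  rw [e, Rf_add24 (M + j) (by omega)]

lemma T6_per (a : ZMod 4) (M : ℕ) (h : 2 ≤ M) : T6 a (M + 24) = T6 a M := by
  rw [T6, T6]
  apply Finset.sum_congr rfl
  intro j _
  have e : M + 24 + j = (M + j) + 24 := by omega
  rw [e, Rf_add24 (M + j) (by omega)]

lemma Qc_per (a : ZMod 4) (M : ℕ) (h : 2 ≤ M) : Qc a (M + 24) = Qc a M + Sn a := by
  rw [Qc, sum_range_split _ M 24, window_pp a M h]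
  rfl

/-- the second-difference recurrence -/
lemma second_diff (a : ZMod 4) (M : ℕ) (h : 2 ≤ M) :
    Fc a (M + 54) + Fc a (M + 6) = 2 * Fc a (M + 30) + Sn a := by
  have k1 := key_rec a M
  have k2 := key_rec a (M + 24)
  simp only [show M + 24 + 30 = M + 54 by omega, show M + 24 + 6 = M + 30 by omega] at k2
  rw [MidS_per a M h, T6_per a M h, Qc_per a M h] at k2
  omega

lemma Sn_balanced : ∀ a b : ZMod 4, Sn a = Sn b := by decide

set_option maxRecDepth 10000 in
lemma bal_base : ∀ n : ℕ, n < 7 → ∀ a b : ZMod 4,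
    (triangleEntries (seg T2 (8*n+7))).count a
      = (triangleEntries (seg T2 (8*n+7))).count b := by decide

lemma Fc_bal (n : ℕ) : ∀ a b : ZMod 4, Fc a (8*n+7) = Fc b (8*n+7) := by
  induction n using Nat.strong_induction_on with
  | _ n ih =>
    by_cases hn : n < 7
    · intro a b
      have h := bal_base n hn a b
      rw [count_tri, count_tri] at h
      exact h
    · obtain ⟨m, rfl⟩ : ∃ m, n = m + 7 := ⟨n - 7, by omega⟩
      intro a b
      have ha := second_diff a (8*m+9) (by omega)
      have hb := second_diff b (8*m+9) (by omega)
      simp only [show 8*m+9+54 = 8*(m+7)+7 by omega, show 8*m+9+6 = 8*(m+1)+7 by omega,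
        show 8*m+9+30 = 8*(m+4)+7 by omega] at ha hb
      have h1 := ih (m+1) (by omega) a b
      have h4 := ih (m+4) (by omega) a b
      have hS := Sn_balanced a b
      omega

theorem stmt4 (k : ℕ) :
    IsStronglyBalanced 8 (seg T2 (8 * k + 7)) := by
  intro t ht
  rw [seg_length] at ht ⊢
  have htk : t ≤ k := by omega
  have hlen : 8*k+7 - 8*t = 8*(k-t)+7 := by omega
  have htake : (seg T2 (8*k+7)).take (8*k+7 - 8*t) = seg T2 (8*(k-t)+7) := by
    rw [hlen, seg, seg, ← List.map_take, List.take_range]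
    congr 2
    omega
  rw [htake]
  intro a b
  rw [count_tri, count_tri]
  exact Fc_bal (k-t) a b
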